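/- A combinatorial code C on n neurons is union-complete if and only if every element of the canonical form CF(I_C) is at most linear in the x_i factors; that is, if x^σ(1−x)^τ ∈ CF(I_C), then |σ| ≤ 1. -/
import Mathlib


open MvPolynomial

/-- The pseudomonomial `x^σ (1-x)^τ` in `F₂[x₁,…,xₙ]`. -/
noncomputable def pseudoMonomial {n : ℕ} (σ τ : Finset (Fin n)) :
    MvPolynomial (Fin n) (ZMod 2) :=
  (∏ i ∈ σ, X i) * (∏ j ∈ τ, (1 - X j))

/-- The indicator vector of a codeword. -/
def evalPt {n : ℕ} (c : Finset (Fin n)) : Fin n → ZMod 2 :=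
  fun i => if i ∈ c then 1 else 0

/-- Membership in the vanishing ideal `I_C`: vanishing at every codeword. -/
def InVanishingIdeal {n : ℕ} (C : Finset (Finset (Fin n)))
    (p : MvPolynomial (Fin n) (ZMod 2)) : Prop :=
  ∀ c ∈ C, eval (evalPt c) p = 0

/-- `(σ, τ)` gives an element `x^σ(1-x)^τ` of the canonical form `CF(I_C)`:
a squarefree pseudomonomial in `I_C`, minimal with respect to divisibility
among squarefree pseudomonomials in `I_C`. -/
def InCanonicalForm {n : ℕ} (C : Finset (Finset (Fin n))) (σ τ : Finset (Fin n)) : Prop :=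
  Disjoint σ τ ∧ InVanishingIdeal C (pseudoMonomial σ τ) ∧
    ∀ σ' τ' : Finset (Fin n), Disjoint σ' τ' →
      InVanishingIdeal C (pseudoMonomial σ' τ') →
      pseudoMonomial σ' τ' ∣ pseudoMonomial σ τ →
      pseudoMonomial σ' τ' = pseudoMonomial σ τ

/-- A code is union-complete if it is closed under pairwise unions. -/
def UnionComplete {n : ℕ} (C : Finset (Finset (Fin n))) : Prop :=
  ∀ σ ∈ C, ∀ τ ∈ C, σ ∪ τ ∈ C

lemma eval_pm_eq_one {n : ℕ} {c σ τ : Finset (Fin n)} (h1 : σ ⊆ c)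
    (h2 : ∀ j ∈ τ, j ∉ c) :
    eval (evalPt c) (pseudoMonomial σ τ) = 1 := by
  simp only [pseudoMonomial, map_mul, map_prod, map_sub, map_one, eval_X]
  rw [Finset.prod_eq_one, Finset.prod_eq_one, one_mul]
  · intro j hj; simp [evalPt, h2 j hj]
  · intro i hi; simp [evalPt, h1 hi]

lemma eval_pm_eq_zero_of_x {n : ℕ} {c σ τ : Finset (Fin n)} {i : Fin n}
    (hi : i ∈ σ) (hic : i ∉ c) :
    eval (evalPt c) (pseudoMonomial σ τ) = 0 := by
  simp only [pseudoMonomial, map_mul, map_prod, eval_X]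
  rw [Finset.prod_eq_zero hi, zero_mul]
  simp [evalPt, hic]

lemma eval_pm_eq_zero_of_tau {n : ℕ} {c σ τ : Finset (Fin n)} {j : Fin n}
    (hj : j ∈ τ) (hjc : j ∈ c) :
    eval (evalPt c) (pseudoMonomial σ τ) = 0 := by
  simp only [pseudoMonomial, map_mul, map_prod, map_sub, map_one, eval_X]
  rw [Finset.prod_eq_zero hj, mul_zero]
  simp [evalPt, hjc]

lemma of_eval_ne_zero {n : ℕ} {c σ τ : Finset (Fin n)}
    (h : eval (evalPt c) (pseudoMonomial σ τ) ≠ 0) :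
    σ ⊆ c ∧ ∀ j ∈ τ, j ∉ c := by
  constructor
  · intro i hi
    by_contra hic
    exact h (eval_pm_eq_zero_of_x hi hic)
  · intro j hj hjc
    exact h (eval_pm_eq_zero_of_tau hj hjc)

lemma pm_dvd_of_subset {n : ℕ} {σ' τ' σ τ : Finset (Fin n)} (h1 : σ' ⊆ σ) (h2 : τ' ⊆ τ) :
    pseudoMonomial σ' τ' ∣ pseudoMonomial σ τ :=
  mul_dvd_mul (Finset.prod_dvd_prod_of_subset _ _ _ h1)
    (Finset.prod_dvd_prod_of_subset _ _ _ h2)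

lemma subset_of_pm_dvd {n : ℕ} {σ' τ' σ τ : Finset (Fin n)} (hd : Disjoint σ τ)
    (hdvd : pseudoMonomial σ' τ' ∣ pseudoMonomial σ τ) :
    σ' ⊆ σ ∧ τ' ⊆ τ := by
  obtain ⟨g, hg⟩ := hdvd
  have key : ∀ c : Finset (Fin n), eval (evalPt c) (pseudoMonomial σ τ) ≠ 0 →
      eval (evalPt c) (pseudoMonomial σ' τ') ≠ 0 := by
    intro c h h0
    apply h
    rw [hg, map_mul, h0, zero_mul]
  constructor
  · have h1 : eval (evalPt σ) (pseudoMonomial σ τ) = 1 :=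
      eval_pm_eq_one (subset_refl _) (fun j hj => Finset.disjoint_right.mp hd hj)
    exact (of_eval_ne_zero (key σ (by rw [h1]; exact one_ne_zero))).1
  · have h1 : eval (evalPt τᶜ) (pseudoMonomial σ τ) = 1 :=
      eval_pm_eq_one (fun i hi => Finset.mem_compl.mpr (Finset.disjoint_left.mp hd hi))
        (fun j hj => by simp [hj])
    intro j hj
    have h2 := (of_eval_ne_zero (key τᶜ (by rw [h1]; exact one_ne_zero))).2 j hj
    simpa using h2

/-- A code `C` is union-complete iff every element `x^σ(1-x)^τ` of the
canonical form `CF(I_C)` satisfies `|σ| ≤ 1`. -/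
theorem unionComplete_iff_canonicalForm_linear_in_x
    (n : ℕ) (C : Finset (Finset (Fin n))) :
    UnionComplete C ↔
      ∀ σ τ : Finset (Fin n), InCanonicalForm C σ τ → σ.card ≤ 1 := by
  classical
  constructor
  · intro hUC σ τ hCF
    by_contra hcard
    push_neg at hcard
    obtain ⟨i, hi, j, hj, hij⟩ := Finset.one_lt_card.mp hcard
    obtain ⟨hdisj, hideal, hmin⟩ := hCF
    have wit : ∀ k ∈ σ, ∃ c ∈ C, σ.erase k ⊆ c ∧ (∀ m ∈ τ, m ∉ c) ∧ k ∉ c := by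
      intro k hk
      have hne : pseudoMonomial (σ.erase k) τ ≠ pseudoMonomial σ τ := by
        intro heq
        have h1 := eval_pm_eq_one (c := σ.erase k) (σ := σ.erase k) (τ := τ) (subset_refl _)
          (fun m hm hmem =>
            Finset.disjoint_left.mp hdisj (Finset.mem_of_mem_erase hmem) hm)
        rw [heq, eval_pm_eq_zero_of_x hk (Finset.notMem_erase k σ)] at h1
        exact one_ne_zero h1.symm
      have hni : ¬ InVanishingIdeal C (pseudoMonomial (σ.erase k) τ) := by
        intro hin
        exact hne (hmin _ _ (hdisj.mono_left (Finset.erase_subset _ _)) hin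
          (pm_dvd_of_subset (Finset.erase_subset _ _) (subset_refl _)))
      simp only [InVanishingIdeal, not_forall] at hni
      obtain ⟨c, hcC, hc0⟩ := hni
      obtain ⟨hsub, htau⟩ := of_eval_ne_zero hc0
      refine ⟨c, hcC, hsub, htau, ?_⟩
      intro hkc
      have hσc : σ ⊆ c := by
        intro x hx
        by_cases hxk : x = k
        · exact hxk ▸ hkc
        · exact hsub (Finset.mem_erase.mpr ⟨hxk, hx⟩)
      have h0 := hideal c hcC
      rw [eval_pm_eq_one hσc htau] at h0
      exact one_ne_zero h0
    obtain ⟨ci, hciC, hsi, hti, hii⟩ := wit i hi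
    obtain ⟨cj, hcjC, hsj, htj, hjj⟩ := wit j hj
    have hcC : ci ∪ cj ∈ C := hUC ci hciC cj hcjC
    have hσ : σ ⊆ ci ∪ cj := by
      intro x hx
      by_cases hxi : x = i
      · exact Finset.mem_union_right _ (hsj (Finset.mem_erase.mpr ⟨hxi ▸ hij, hx⟩))
      · exact Finset.mem_union_left _ (hsi (Finset.mem_erase.mpr ⟨hxi, hx⟩))
    have hτ : ∀ m ∈ τ, m ∉ ci ∪ cj := by
      intro m hm hmem
      rcases Finset.mem_union.mp hmem with h | h
      · exact hti m hm h
      · exact htj m hm h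
    have h0 := hideal _ hcC
    rw [eval_pm_eq_one hσ hτ] at h0
    exact one_ne_zero h0
  · intro hCF a ha b hb
    by_contra hab
    have hI₀ : InVanishingIdeal C (pseudoMonomial (a ∪ b) (a ∪ b)ᶜ) := by
      intro c hc
      by_contra h0
      obtain ⟨h1, h2⟩ := of_eval_ne_zero h0
      have hceq : c = a ∪ b := by
        apply Finset.Subset.antisymm
        · intro x hx
          by_contra hx'
          exact h2 x (Finset.mem_compl.mpr hx') hx
        · exact h1
      exact hab (hceq ▸ hc)
    have hex : ∃ k : ℕ, ∃ σ τ : Finset (Fin n),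
        (Disjoint σ τ ∧ InVanishingIdeal C (pseudoMonomial σ τ) ∧
          pseudoMonomial σ τ ∣ pseudoMonomial (a ∪ b) (a ∪ b)ᶜ) ∧ σ.card + τ.card = k :=
      ⟨_, a ∪ b, (a ∪ b)ᶜ, ⟨disjoint_compl_right, hI₀, dvd_refl _⟩, rfl⟩
    obtain ⟨σ, τ, ⟨hdisj, hideal, hdvd⟩, hk⟩ := Nat.find_spec hex
    have hmin : ∀ σ' τ' : Finset (Fin n), Disjoint σ' τ' →
        InVanishingIdeal C (pseudoMonomial σ' τ') →
        pseudoMonomial σ' τ' ∣ pseudoMonomial (a ∪ b) (a ∪ b)ᶜ →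
        Nat.find hex ≤ σ'.card + τ'.card := fun σ' τ' h1 h2 h3 =>
      Nat.find_min' hex ⟨σ', τ', ⟨h1, h2, h3⟩, rfl⟩
    have hCFel : InCanonicalForm C σ τ := by
      refine ⟨hdisj, hideal, ?_⟩
      intro σ' τ' h1 h2 h3
      obtain ⟨hss, hts⟩ := subset_of_pm_dvd hdisj h3
      have hle := hmin σ' τ' h1 h2 (h3.trans hdvd)
      rw [← hk] at hle
      have hcs : σ'.card ≤ σ.card := Finset.card_le_card hss
      have hct : τ'.card ≤ τ.card := Finset.card_le_card hts
      have hσe : σ' = σ := Finset.eq_of_subset_of_card_le hss (by omega)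
      have hτe : τ' = τ := Finset.eq_of_subset_of_card_le hts (by omega)
      rw [hσe, hτe]
    have hcard : σ.card ≤ 1 := hCF σ τ hCFel
    obtain ⟨g, hg⟩ := hdvd
    have hev : eval (evalPt (a ∪ b)) (pseudoMonomial σ τ) ≠ 0 := by
      intro h0
      have h1 : eval (evalPt (a ∪ b)) (pseudoMonomial (a ∪ b) (a ∪ b)ᶜ) = 1 :=
        eval_pm_eq_one (subset_refl _) (fun j hj => Finset.mem_compl.mp hj)
      rw [hg, map_mul, h0, zero_mul] at h1
      exact one_ne_zero h1.symm
    obtain ⟨hsub, htau⟩ := of_eval_ne_zero hev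
    have hexc : ∃ c', c' ∈ C ∧ σ ⊆ c' ∧ c' ⊆ a ∪ b := by
      rcases σ.eq_empty_or_nonempty with h | ⟨i, hi⟩
      · exact ⟨a, ha, by simp [h], Finset.subset_union_left⟩
      · have hieq : ∀ x ∈ σ, x = i := fun x hx => Finset.card_le_one.mp hcard x hx i hi
        rcases Finset.mem_union.mp (hsub hi) with hia | hib
        · exact ⟨a, ha, fun x hx => (hieq x hx) ▸ hia, Finset.subset_union_left⟩
        · exact ⟨b, hb, fun x hx => (hieq x hx) ▸ hib, Finset.subset_union_right⟩
    obtain ⟨c', hc'C, hsc', hc'ab⟩ := hexc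
    have h0 := hideal c' hc'C
    rw [eval_pm_eq_one hsc' (fun m hm hmc => htau m hm (hc'ab hmc))] at h0
    exact one_ne_zero h0
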